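/- For the T3 pencil of metrics, with g₂ the 2×2 matrix with entries g₂¹¹ = g₂²² = 0, g₂¹² = g₂²¹ = -u¹, and g₁ the constant matrix with g₁¹¹ = 0, g₁¹² = g₁²¹ = η¹², g₁²² = η²² (η¹² ≠ 0), the affinor L = g₂ g₁⁻¹ has a single eigenvalue -u¹/η¹² of algebraic multiplicity 2, and if η²² ≠ 0 and u¹ ≠ 0 then L is not diagonalizable. -/

import Mathlib

open Polynomial

/-- For the T3 pencil of metrics, the affinor `L = g₂ * g₁⁻¹` has characteristic
polynomial `(λ + u¹/η¹²)²` (a single eigenvalue `-u¹/η¹²` of algebraic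
multiplicity 2), and if `η²² ≠ 0` and `u¹ ≠ 0` then `L` is not diagonalizable. -/
theorem T3_affinor (η12 η22 u1 : ℝ) (h12 : η12 ≠ 0) :
    ((!![0, -u1; -u1, 0] : Matrix (Fin 2) (Fin 2) ℝ) *
        (!![0, η12; η12, η22] : Matrix (Fin 2) (Fin 2) ℝ)⁻¹).charpoly
      = (X + C (u1 / η12)) ^ 2 ∧
    (η22 ≠ 0 → u1 ≠ 0 →
      ¬ ∃ (P D : Matrix (Fin 2) (Fin 2) ℝ), IsUnit P ∧ D.IsDiag ∧
        (!![0, -u1; -u1, 0] : Matrix (Fin 2) (Fin 2) ℝ) *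
            (!![0, η12; η12, η22] : Matrix (Fin 2) (Fin 2) ℝ)⁻¹
          = P * D * P⁻¹) := by
  have hinv : (!![0, η12; η12, η22] : Matrix (Fin 2) (Fin 2) ℝ)⁻¹
      = !![-η22/η12^2, 1/η12; 1/η12, 0] := by
    apply Matrix.inv_eq_right_inv
    ext i j
    fin_cases i <;> fin_cases j <;>
      simp [Matrix.mul_apply, Fin.sum_univ_two] <;> field_simp <;> ring
  have hL : (!![0, -u1; -u1, 0] : Matrix (Fin 2) (Fin 2) ℝ) *
        (!![0, η12; η12, η22] : Matrix (Fin 2) (Fin 2) ℝ)⁻¹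
      = !![-u1/η12, 0; u1*η22/η12^2, -u1/η12] := by
    rw [hinv]
    ext i j
    fin_cases i <;> fin_cases j <;>
      simp [Matrix.mul_apply, Fin.sum_univ_two] <;> field_simp <;> ring
  constructor
  · rw [hL, Matrix.charpoly, Matrix.det_fin_two]
    simp [Matrix.charmatrix_apply_eq, Matrix.charmatrix_apply_ne, neg_div, map_neg]
    ring
  · intro h22 hu ⟨P, D, hP, hD, hEq⟩
    rw [hL] at hEq
    have hPdet : IsUnit P.det := (Matrix.isUnit_iff_isUnit_det P).mp hP
    have hPi : P⁻¹ * P = 1 := Matrix.nonsing_inv_mul P hPdet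
    have hPi' : P * P⁻¹ = 1 := Matrix.mul_nonsing_inv P hPdet
    set a := D 0 0 with ha0
    set b := D 1 1 with hb0
    have hD01 : D 0 1 = 0 := hD (by decide)
    have hD10 : D 1 0 = 0 := hD (by decide)
    have htr : (-u1/η12) + (-u1/η12) = a + b := by
      have := congrArg Matrix.trace hEq
      rw [Matrix.trace_mul_comm (P * D) P⁻¹, ← Matrix.mul_assoc, hPi,
        Matrix.one_mul] at this
      simpa [Matrix.trace_fin_two] using this
    have hdet : (-u1/η12) * (-u1/η12) = a * b := by
      have := congrArg Matrix.det hEq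
      rw [Matrix.det_mul, Matrix.det_mul, Matrix.det_nonsing_inv] at this
      have h2 : P.det * D.det * (Ring.inverse P.det) = D.det := by
        rw [mul_comm P.det D.det, mul_assoc, Ring.mul_inverse_cancel _ hPdet, mul_one]
      rw [h2] at this
      simpa [Matrix.det_fin_two, hD01, hD10] using this
    have key : (a - b) ^ 2 = 0 := by
      have : (a - b) ^ 2 = (a + b) ^ 2 - 4 * (a * b) := by ring
      rw [this, ← htr, ← hdet]; ring
    have hab : a = b := sub_eq_zero.mp (pow_eq_zero_iff two_ne_zero |>.mp key)
    have hDeq : D = a • (1 : Matrix (Fin 2) (Fin 2) ℝ) := by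
      ext i j
      fin_cases i <;> fin_cases j
      · simp [Matrix.one_apply, ha0]
      · simpa using hD01
      · simpa using hD10
      · simpa [Matrix.one_apply] using hab.symm
    rw [hDeq] at hEq
    have h10 : (!![-u1/η12, 0; u1*η22/η12^2, -u1/η12] : Matrix (Fin 2) (Fin 2) ℝ) 1 0
        = (a • (1 : Matrix (Fin 2) (Fin 2) ℝ)) 1 0 := by
      rw [hEq, Matrix.mul_smul, Matrix.smul_mul, Matrix.mul_one, hPi']
    have e2 : (a • (1 : Matrix (Fin 2) (Fin 2) ℝ)) 1 0 = 0 := by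
      simp [Matrix.smul_apply, Matrix.one_apply]
    rw [e2] at h10
    norm_num at h10
    tauto
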